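/- arXiv:math/0111246 — 2 statements merged into one kernel-verified Lean document; each statement's English description precedes it below -/
import Mathlib

section
/- Applying the elementary symmetric differential operator e_k(∂X) to Δ_L(X;Y) yields Σ_{1≤i_1<...<i_k≤n} Δ_{e_k(i_1,...,i_k;L)}(X;Y), where e_k(i_1,...,i_k;L) is the diagram obtained from L by replacing each cell (p_{i_r}, q_{i_r}) with (p_{i_r} − 1, q_{i_r}); terms whose diagram has a negative coordinate or repeated cell are 0. -/
open MvPolynomial

noncomputable def Delta (n : ℕ) (L : Fin n → ℕ × ℕ) : MvPolynomial (Fin n ⊕ Fin n) ℚ :=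
  Matrix.det (Matrix.of fun i j : Fin n =>
    C ((((L j).1.factorial : ℚ) * ((L j).2.factorial : ℚ))⁻¹) *
      X (Sum.inl i) ^ (L j).1 * X (Sum.inr i) ^ (L j).2)

noncomputable def DeltaZ (n : ℕ) (L : Fin n → ℤ × ℤ) : MvPolynomial (Fin n ⊕ Fin n) ℚ :=
  if ∀ i, 0 ≤ (L i).1 ∧ 0 ≤ (L i).2 then
    Delta n fun i => ((L i).1.toNat, (L i).2.toNat)
  else 0

noncomputable def diffOp {σ : Type} (f P : MvPolynomial σ ℚ) : MvPolynomial σ ℚ :=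
  ∑ d ∈ f.support, ∑ e ∈ P.support,
    monomial (e - d) (f.coeff d * P.coeff e *
      ∏ i ∈ d.support, (Nat.descFactorial (e i) (d i) : ℚ))

def eps (n : ℕ) (L : Fin n → ℤ × ℤ) : ℚ :=
  if Function.Injective L ∧ ∀ i, 0 ≤ (L i).1 ∧ 0 ≤ (L i).2 then 1 else 0

def tailCount (n : ℕ) {ℓ : ℕ} (α : Fin ℓ → ℕ) (T : ∀ j, Fin (α j) → Fin n) (k : ℕ)
    (i : Fin n) : ℕ :=
  ∑ j : Fin ℓ, if k ≤ (j : ℕ) then (Finset.univ.filter fun r => T j r = i).card else 0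

def applyTail (n : ℕ) {ℓ : ℕ} (α : Fin ℓ → ℕ) (T : ∀ j, Fin (α j) → Fin n) (k : ℕ)
    (L : Fin n → ℤ × ℤ) : Fin n → ℤ × ℤ :=
  fun i => ((L i).1 - tailCount n α T k i, (L i).2)

def epsTuple (n : ℕ) {ℓ : ℕ} (α : Fin ℓ → ℕ) (T : ∀ j, Fin (α j) → Fin n)
    (L : Fin n → ℤ × ℤ) : ℚ :=
  ∏ k : Fin ℓ, eps n (applyTail n α T k L)

noncomputable def eInt (n : ℕ) (k : ℤ) : MvPolynomial (Fin n) ℚ :=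
  if 0 ≤ k then esymm (Fin n) ℚ k.toNat else 0

noncomputable def schurDual (n ℓ : ℕ) (lam' : Fin ℓ → ℕ) : MvPolynomial (Fin n) ℚ :=
  Matrix.det (Matrix.of fun i j : Fin ℓ => eInt n ((lam' j : ℤ) + (i : ℕ) - (j : ℕ)))

def IsCSYT (n : ℕ) {ℓ : ℕ} (α : Fin ℓ → ℕ) (T : ∀ j, Fin (α j) → Fin n) : Prop :=
  (∀ j, StrictMono (T j)) ∧
  ∀ j j' : Fin ℓ, (j' : ℕ) = (j : ℕ) + 1 →
    ∀ (i : Fin (α j)) (i' : Fin (α j')), (i : ℕ) = (i' : ℕ) → T j i ≤ T j' i'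

section Aux
open Finset

noncomputable def cf (p : ℕ × ℕ) : ℚ := ((p.1.factorial : ℚ) * (p.2.factorial : ℚ))⁻¹

noncomputable def dS (n : ℕ) (s : Finset (Fin n)) : (Fin n ⊕ Fin n) →₀ ℕ :=
  ∑ i ∈ s, Finsupp.single (Sum.inl i) 1

noncomputable def FF (n : ℕ) (P : Fin n → ℕ × ℕ) : (Fin n ⊕ Fin n) →₀ ℕ :=
  ∑ i, (Finsupp.single (Sum.inl i) (P i).1 + Finsupp.single (Sum.inr i) (P i).2)

lemma dS_apply_inl (n : ℕ) (s : Finset (Fin n)) (a : Fin n) :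
    dS n s (Sum.inl a) = if a ∈ s then 1 else 0 := by
  simp [dS, Finsupp.finset_sum_apply, Finsupp.single_apply]

lemma dS_apply_inr (n : ℕ) (s : Finset (Fin n)) (b : Fin n) :
    dS n s (Sum.inr b) = 0 := by
  simp [dS, Finsupp.finset_sum_apply, Finsupp.single_apply]

lemma FF_apply_inl (n : ℕ) (P : Fin n → ℕ × ℕ) (a : Fin n) :
    FF n P (Sum.inl a) = (P a).1 := by
  simp [FF, Finsupp.finset_sum_apply, Finsupp.single_apply]

lemma FF_apply_inr (n : ℕ) (P : Fin n → ℕ × ℕ) (b : Fin n) :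
    FF n P (Sum.inr b) = (P b).2 := by
  simp [FF, Finsupp.finset_sum_apply, Finsupp.single_apply]

lemma prod_monomial {σ : Type} {ι : Type*} (A : Finset ι) (d : ι → (σ →₀ ℕ)) (c : ι → ℚ) :
    ∏ i ∈ A, (monomial (d i) (c i) : MvPolynomial σ ℚ) = monomial (∑ i ∈ A, d i) (∏ i ∈ A, c i) := by
  classical
  induction A using Finset.cons_induction with
  | empty => simp [monomial_zero']
  | cons a A ha ih =>
      rw [Finset.prod_cons, Finset.sum_cons, Finset.prod_cons, ih, monomial_mul]


lemma diffOp_eq_superset {σ : Type} (f P : MvPolynomial σ ℚ) (U V : Finset (σ →₀ ℕ))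
    (hU : f.support ⊆ U) (hV : P.support ⊆ V) :
    diffOp f P = ∑ d ∈ U, ∑ e ∈ V,
      monomial (e - d) (f.coeff d * P.coeff e *
        ∏ i ∈ d.support, (Nat.descFactorial (e i) (d i) : ℚ)) := by
  rw [diffOp]
  rw [Finset.sum_subset hU (by
    intro d _ hd
    rw [MvPolynomial.notMem_support_iff.mp hd]
    simp)]
  refine Finset.sum_congr rfl fun d _ => ?_
  rw [Finset.sum_subset hV (by
    intro e _ he
    rw [MvPolynomial.notMem_support_iff.mp he]
    simp)]

lemma diffOp_sum_left {σ : Type} {ι : Type*} (A : Finset ι) (m : ι → MvPolynomial σ ℚ)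
    (P : MvPolynomial σ ℚ) :
    diffOp (∑ a ∈ A, m a) P = ∑ a ∈ A, diffOp (m a) P := by
  classical
  set U := A.biUnion fun a => (m a).support with hUdef
  calc diffOp (∑ a ∈ A, m a) P
      = ∑ d ∈ U, ∑ e ∈ P.support, ∑ a ∈ A, monomial (e - d) ((m a).coeff d * P.coeff e *
          ∏ i ∈ d.support, (Nat.descFactorial (e i) (d i) : ℚ)) := by
        rw [diffOp_eq_superset _ P U P.support MvPolynomial.support_sum subset_rfl]
        refine Finset.sum_congr rfl fun d _ => Finset.sum_congr rfl fun e _ => ?_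
        rw [← map_sum, ← Finset.sum_mul, ← Finset.sum_mul, MvPolynomial.coeff_sum]
    _ = ∑ d ∈ U, ∑ a ∈ A, ∑ e ∈ P.support, monomial (e - d) ((m a).coeff d * P.coeff e *
          ∏ i ∈ d.support, (Nat.descFactorial (e i) (d i) : ℚ)) :=
        Finset.sum_congr rfl fun d _ => Finset.sum_comm
    _ = ∑ a ∈ A, ∑ d ∈ U, ∑ e ∈ P.support, monomial (e - d) ((m a).coeff d * P.coeff e *
          ∏ i ∈ d.support, (Nat.descFactorial (e i) (d i) : ℚ)) := Finset.sum_comm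
    _ = ∑ a ∈ A, diffOp (m a) P :=
        Finset.sum_congr rfl fun a ha => (diffOp_eq_superset (m a) P U P.support
          (Finset.subset_biUnion_of_mem (fun a => (m a).support) ha) subset_rfl).symm

lemma diffOp_sum_right {σ : Type} {ι : Type*} (A : Finset ι) (f : MvPolynomial σ ℚ)
    (Q : ι → MvPolynomial σ ℚ) :
    diffOp f (∑ a ∈ A, Q a) = ∑ a ∈ A, diffOp f (Q a) := by
  classical
  set V := A.biUnion fun a => (Q a).support with hVdef
  calc diffOp f (∑ a ∈ A, Q a)
      = ∑ d ∈ f.support, ∑ e ∈ V, ∑ a ∈ A, monomial (e - d) (f.coeff d * (Q a).coeff e *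
          ∏ i ∈ d.support, (Nat.descFactorial (e i) (d i) : ℚ)) := by
        rw [diffOp_eq_superset f _ f.support V subset_rfl MvPolynomial.support_sum]
        refine Finset.sum_congr rfl fun d _ => Finset.sum_congr rfl fun e _ => ?_
        rw [MvPolynomial.coeff_sum, Finset.mul_sum, Finset.sum_mul, map_sum]
    _ = ∑ d ∈ f.support, ∑ a ∈ A, ∑ e ∈ V, monomial (e - d) (f.coeff d * (Q a).coeff e *
          ∏ i ∈ d.support, (Nat.descFactorial (e i) (d i) : ℚ)) :=
        Finset.sum_congr rfl fun d _ => Finset.sum_comm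
    _ = ∑ a ∈ A, ∑ d ∈ f.support, ∑ e ∈ V, monomial (e - d) (f.coeff d * (Q a).coeff e *
          ∏ i ∈ d.support, (Nat.descFactorial (e i) (d i) : ℚ)) := Finset.sum_comm
    _ = ∑ a ∈ A, diffOp f (Q a) :=
        Finset.sum_congr rfl fun a ha => (diffOp_eq_superset f (Q a) f.support V
          subset_rfl (Finset.subset_biUnion_of_mem (fun a => (Q a).support) ha)).symm

lemma diffOp_monomial_monomial {σ : Type} (d e : σ →₀ ℕ) (c : ℚ) :
    diffOp (monomial d 1) (monomial e c) =
      monomial (e - d) (c * ∏ i ∈ d.support, (Nat.descFactorial (e i) (d i) : ℚ)) := by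
  classical
  by_cases hc : c = 0
  · simp [hc, diffOp, support_monomial]
  · simp [diffOp, support_monomial, hc, coeff_monomial]


lemma esymm_renamed (n k : ℕ) :
    rename Sum.inl (esymm (Fin n) ℚ k) =
      ∑ s ∈ Finset.powersetCard k Finset.univ,
        (monomial (dS n s) 1 : MvPolynomial (Fin n ⊕ Fin n) ℚ) := by
  rw [show esymm (Fin n) ℚ k = ∑ t ∈ Finset.powersetCard k Finset.univ, ∏ i ∈ t, X i from rfl]
  rw [map_sum]
  refine Finset.sum_congr rfl fun s _ => ?_
  rw [map_prod]
  have : ∀ i : Fin n, (rename Sum.inl (X i) : MvPolynomial (Fin n ⊕ Fin n) ℚ) =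
      monomial (Finsupp.single (Sum.inl i) 1) 1 := by
    intro i
    rw [rename_X, ← pow_one (X (Sum.inl i)), X_pow_eq_monomial]
  rw [Finset.prod_congr rfl fun i _ => this i, prod_monomial, dS, Finset.prod_const_one]

lemma weight_dS (n : ℕ) (s : Finset (Fin n)) (e : (Fin n ⊕ Fin n) →₀ ℕ) :
    (∏ i ∈ (dS n s).support, (Nat.descFactorial (e i) (dS n s i) : ℚ)) =
      ∏ i ∈ s, (e (Sum.inl i) : ℚ) := by
  rw [Finset.prod_subset (Finset.subset_univ (dS n s).support) (by
    intro x _ hx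
    rw [Finsupp.notMem_support_iff.mp hx]
    simp)]
  rw [Fintype.prod_sum_type]
  have h1 : ∀ b : Fin n, (Nat.descFactorial (e (Sum.inr b)) (dS n s (Sum.inr b)) : ℚ) = 1 := by
    intro b; rw [dS_apply_inr]; simp
  rw [Finset.prod_congr rfl fun b _ => h1 b, Finset.prod_const_one, mul_one]
  have h2 : ∀ a : Fin n, (Nat.descFactorial (e (Sum.inl a)) (dS n s (Sum.inl a)) : ℚ) =
      if a ∈ s then (e (Sum.inl a) : ℚ) else 1 := by
    intro a; rw [dS_apply_inl]; split_ifs <;> simp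
  rw [Finset.prod_congr rfl fun a _ => h2 a, Finset.prod_ite_mem, Finset.univ_inter]

lemma FF_sub_dS (n : ℕ) (Q : Fin n → ℕ × ℕ) (s : Finset (Fin n))
    (hval : ∀ i ∈ s, 1 ≤ (Q i).1) :
    FF n Q - dS n s = FF n (fun i => if i ∈ s then ((Q i).1 - 1, (Q i).2) else Q i) := by
  ext x
  rw [Finsupp.tsub_apply]
  cases x with
  | inl a =>
      rw [FF_apply_inl, FF_apply_inl, dS_apply_inl]
      by_cases ha : a ∈ s
      · have := hval a ha
        simp [ha]
      · simp [ha]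
  | inr b =>
      rw [FF_apply_inr, FF_apply_inr, dS_apply_inr]
      by_cases hb : b ∈ s <;> simp [hb]

lemma cf_step (p q : ℕ) (hp : 1 ≤ p) : cf (p, q) * (p : ℚ) = cf (p - 1, q) := by
  have h := Nat.mul_factorial_pred (show p ≠ 0 by omega)
  have hp0 : (p : ℚ) ≠ 0 := Nat.cast_ne_zero.mpr (by omega)
  have h1 : ((p - 1).factorial : ℚ) ≠ 0 := Nat.cast_ne_zero.mpr (Nat.factorial_ne_zero _)
  have h2 : (q.factorial : ℚ) ≠ 0 := Nat.cast_ne_zero.mpr (Nat.factorial_ne_zero _)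
  rw [cf, cf]
  simp only
  rw [← h]
  push_cast
  field_simp

lemma cf_prod (n : ℕ) (Q : Fin n → ℕ × ℕ) (s : Finset (Fin n))
    (hval : ∀ i ∈ s, 1 ≤ (Q i).1) :
    (∏ i, cf (Q i)) * ∏ i ∈ s, ((Q i).1 : ℚ) =
      ∏ i, cf (if i ∈ s then ((Q i).1 - 1, (Q i).2) else Q i) := by
  rw [← Finset.prod_mul_prod_compl s (fun i => cf (Q i)),
      ← Finset.prod_mul_prod_compl s (fun i => cf (if i ∈ s then ((Q i).1 - 1, (Q i).2) else Q i))]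
  have hcompl : ∀ i ∈ sᶜ, cf (if i ∈ s then ((Q i).1 - 1, (Q i).2) else Q i) = cf (Q i) := by
    intro i hi
    rw [if_neg (Finset.mem_compl.mp hi)]
  rw [Finset.prod_congr rfl hcompl]
  have hs : ∀ i ∈ s, cf (if i ∈ s then ((Q i).1 - 1, (Q i).2) else Q i) = cf (Q i) * ((Q i).1 : ℚ) := by
    intro i hi
    rw [if_pos hi, ← cf_step _ _ (hval i hi)]
  rw [Finset.prod_congr rfl hs, Finset.prod_mul_distrib]
  ring

lemma Delta_eq (n : ℕ) (P : Fin n → ℕ × ℕ) :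
    Delta n P = ∑ σ : Equiv.Perm (Fin n),
      monomial (FF n (P ∘ σ)) (((Equiv.Perm.sign σ : ℤ) : ℚ) * ∏ i, cf (P (σ i))) := by
  rw [Delta, ← Matrix.det_transpose, Matrix.det_apply']
  refine Finset.sum_congr rfl fun σ _ => ?_
  have hentry : ∀ i : Fin n,
      (Matrix.of fun i j : Fin n =>
        C ((((P j).1.factorial : ℚ) * ((P j).2.factorial : ℚ))⁻¹) *
          X (Sum.inl i) ^ (P j).1 * X (Sum.inr i) ^ (P j).2).transpose (σ i) i =
      (monomial (Finsupp.single (Sum.inl i) ((P (σ i)).1) +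
        Finsupp.single (Sum.inr i) ((P (σ i)).2)) (cf (P (σ i))) : MvPolynomial (Fin n ⊕ Fin n) ℚ) := by
    intro i
    rw [Matrix.transpose_apply, Matrix.of_apply, X_pow_eq_monomial, X_pow_eq_monomial,
      mul_assoc, monomial_mul, C_mul_monomial]
    rw [cf]
    simp
  rw [Finset.prod_congr rfl fun i _ => hentry i, prod_monomial]
  have hcast : (((Equiv.Perm.sign σ : ℤ)) : MvPolynomial (Fin n ⊕ Fin n) ℚ) =
      C (((Equiv.Perm.sign σ : ℤ) : ℚ)) := by simp
  rw [hcast, C_mul_monomial]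
  rfl



end Aux

theorem stmt4 (n k : ℕ) (hk : 1 ≤ k) (L : Fin n → ℤ × ℤ)
    (hinj : Function.Injective L) (hpos : ∀ i, 0 ≤ (L i).1 ∧ 0 ≤ (L i).2) :
    diffOp (rename Sum.inl (esymm (Fin n) ℚ k)) (DeltaZ n L) =
      ∑ s ∈ Finset.powersetCard k (Finset.univ : Finset (Fin n)),
        DeltaZ n fun i => if i ∈ s then ((L i).1 - 1, (L i).2) else L i := by
  classical
  set Lnat : Fin n → ℕ × ℕ := fun i => ((L i).1.toNat, (L i).2.toNat) with hLnat
  set pc := Finset.powersetCard k (Finset.univ : Finset (Fin n)) with hpc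
  -- the generic summand
  set G : Finset (Fin n) → Equiv.Perm (Fin n) → MvPolynomial (Fin n ⊕ Fin n) ℚ :=
    fun s σ => monomial (FF n (Lnat ∘ σ) - dS n s)
      ((((Equiv.Perm.sign σ : ℤ) : ℚ) * ∏ i, cf (Lnat (σ i))) *
        ∏ i ∈ s, ((Lnat (σ i)).1 : ℚ)) with hG
  have hDL : DeltaZ n L = Delta n Lnat := by rw [DeltaZ, if_pos hpos]
  have lhs_eq : diffOp (rename Sum.inl (esymm (Fin n) ℚ k)) (DeltaZ n L) =
      ∑ s ∈ pc, ∑ σ : Equiv.Perm (Fin n), G s σ := by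
    rw [hDL, esymm_renamed, diffOp_sum_left]
    refine Finset.sum_congr rfl fun s _ => ?_
    rw [Delta_eq, diffOp_sum_right]
    refine Finset.sum_congr rfl fun σ _ => ?_
    rw [diffOp_monomial_monomial, hG]
    congr 1
    rw [weight_dS]
    congr 1
    exact Finset.prod_congr rfl fun i _ => by rw [FF_apply_inl]; rfl
  rw [lhs_eq, Finset.sum_comm]
  have reindex : ∀ σ : Equiv.Perm (Fin n),
      ∑ s ∈ pc, G s σ = ∑ t ∈ pc, G (t.image σ.symm) σ := by
    intro σ
    refine Finset.sum_bij' (fun s _ => s.image σ) (fun t _ => t.image σ.symm) ?_ ?_ ?_ ?_ ?_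
    · intro s hs
      have h := (Finset.mem_powersetCard.mp hs).2
      exact Finset.mem_powersetCard.mpr ⟨Finset.subset_univ _,
        by rw [Finset.card_image_of_injective _ σ.injective]; exact h⟩
    · intro t ht
      have h := (Finset.mem_powersetCard.mp ht).2
      exact Finset.mem_powersetCard.mpr ⟨Finset.subset_univ _,
        by rw [Finset.card_image_of_injective _ σ.symm.injective]; exact h⟩
    · intro s _
      simp [Finset.image_image]
    · intro t _
      simp [Finset.image_image]
    · intro s _
      congr 1
      simp [Finset.image_image]
  rw [Finset.sum_congr rfl fun σ _ => reindex σ, Finset.sum_comm]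
  refine Finset.sum_congr rfl fun t _ => ?_
  have hmem : ∀ (σ : Equiv.Perm (Fin n)) (i : Fin n), i ∈ t.image σ.symm ↔ σ i ∈ t := by
    intro σ i
    simp only [Finset.mem_image]
    constructor
    · rintro ⟨j, hj, rfl⟩; simpa using hj
    · intro h; exact ⟨σ i, h, by simp⟩
  by_cases hval : ∀ j ∈ t, 1 ≤ (L j).1
  · -- valid case
    have hnonneg : ∀ i, 0 ≤ ((if i ∈ t then ((L i).1 - 1, (L i).2) else L i) : ℤ × ℤ).1 ∧
        0 ≤ ((if i ∈ t then ((L i).1 - 1, (L i).2) else L i) : ℤ × ℤ).2 := by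
      intro i
      by_cases hi : i ∈ t
      · simp only [if_pos hi]
        exact ⟨by have := hval i hi; omega, (hpos i).2⟩
      · simp only [if_neg hi]; exact hpos i
    rw [DeltaZ, if_pos hnonneg]
    have hfun : (fun i => (((if i ∈ t then ((L i).1 - 1, (L i).2) else L i) : ℤ × ℤ).1.toNat,
        ((if i ∈ t then ((L i).1 - 1, (L i).2) else L i) : ℤ × ℤ).2.toNat)) =
        fun i => if i ∈ t then ((Lnat i).1 - 1, (Lnat i).2) else Lnat i := by
      funext i
      by_cases hi : i ∈ t
      · simp only [if_pos hi, hLnat]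
        have := hval i hi
        congr 1 <;> omega
      · simp only [if_neg hi, hLnat]
    rw [hfun, Delta_eq]
    refine Finset.sum_congr rfl fun σ _ => ?_
    simp only [hG]
    have hQ : Lnat ∘ ⇑σ = fun i => Lnat (σ i) := rfl
    rw [hQ]
    have hvalnat : ∀ i ∈ t.image σ.symm, 1 ≤ (Lnat (σ i)).1 := by
      intro i hi
      have h1 := hval (σ i) ((hmem σ i).mp hi)
      simp only [hLnat]
      omega
    rw [FF_sub_dS n (fun i => Lnat (σ i)) (t.image σ.symm) hvalnat, mul_assoc,
      cf_prod n (fun i => Lnat (σ i)) (t.image σ.symm) hvalnat]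
    have hfun2 : (fun i => if i ∈ t.image σ.symm then ((Lnat (σ i)).1 - 1, (Lnat (σ i)).2)
        else Lnat (σ i)) =
        (fun i => if i ∈ t then ((Lnat i).1 - 1, (Lnat i).2) else Lnat i) ∘ ⇑σ := by
      funext i
      simp only [Function.comp_apply]
      by_cases hi : σ i ∈ t
      · rw [if_pos ((hmem σ i).mpr hi), if_pos hi]
      · rw [if_neg (fun h => hi ((hmem σ i).mp h)), if_neg hi]
    rw [hfun2]
    congr 2
    refine Finset.prod_congr rfl fun i _ => ?_
    by_cases hi : σ i ∈ t
    · rw [if_pos ((hmem σ i).mpr hi), if_pos hi]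
    · rw [if_neg (fun h => hi ((hmem σ i).mp h)), if_neg hi]
  · -- invalid case
    push_neg at hval
    obtain ⟨j, hjt, hj⟩ := hval
    have hzero : DeltaZ n (fun i => if i ∈ t then ((L i).1 - 1, (L i).2) else L i) = 0 := by
      rw [DeltaZ, if_neg]
      intro h
      have := (h j).1
      rw [if_pos hjt] at this
      simp only at this
      omega
    rw [hzero]
    refine Finset.sum_eq_zero fun σ _ => ?_
    simp only [hG]
    have hj' : σ.symm j ∈ t.image σ.symm := Finset.mem_image_of_mem _ hjt
    have hz : ((Lnat (σ (σ.symm j))).1 : ℚ) = 0 := by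
      simp only [Equiv.apply_symm_apply, hLnat]
      have := (hpos j).1
      norm_cast
      omega
    rw [Finset.prod_eq_zero hj' hz, mul_zero, map_zero]
end

section
/- A tableau T = (T_1,...,T_ℓ) ∈ CT_α with strictly increasing columns is a column-strict Young tableau (i.e. α is a partition and rows of T are weakly increasing) if and only if for every pair of adjacent columns T_j, T_{j+1}, the parenthesis word of the merged sorted multiset — with entries from T_j marked as left parentheses and entries from T_{j+1} marked as right parentheses, equal values reading the left-column occurrence first — has no unpaired right parenthesis under the usual parenthesis-matching rule. -/
def sortKey (p q : ℕ × ℕ) : Prop := p.1 < q.1 ∨ (p.1 = q.1 ∧ p.2 ≤ q.2)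

instance : DecidableRel sortKey := fun p q => by unfold sortKey; infer_instance

/-- The merged, sorted list of entries of two columns, each entry tagged with
`0` (left column) or `1` (right column); ties are broken left column first. -/
def pairList {n a b : ℕ} (c1 : Fin a → Fin n) (c2 : Fin b → Fin n) : List (ℕ × ℕ) :=
  List.insertionSort sortKey
    ((List.ofFn fun r => ((c1 r : ℕ), 0)) ++ List.ofFn fun s => ((c2 s : ℕ), 1))

/-- The parenthesis word of two columns: `true` = '(' (left column),
`false` = ')' (right column). -/
def pairWord {n a b : ℕ} (c1 : Fin a → Fin n) (c2 : Fin b → Fin n) : List Bool :=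
  (pairList c1 c2).map fun p => p.2 == 0

/-- The multiset of entries of the two columns. -/
def pairVals {n a b : ℕ} (c1 : Fin a → Fin n) (c2 : Fin b → Fin n) : Multiset ℕ :=
  ((List.ofFn fun r => ((c1 r : ℕ))) ++ List.ofFn fun s => ((c2 s : ℕ)) : List ℕ)

/-- The ')' at position `t` of `w` is unpaired under the usual matching rule. -/
def UnpairedRightAt (w : List Bool) (t : ℕ) : Prop :=
  t < w.length ∧ w.getD t true = false ∧
    (w.take t).count true ≤ (w.take t).count false

/-- The '(' at position `t` of `w` is unpaired under the usual matching rule. -/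
def UnpairedLeftAt (w : List Bool) (t : ℕ) : Prop :=
  t < w.length ∧ w.getD t false = true ∧
    (w.drop (t + 1)).count false ≤ (w.drop (t + 1)).count true

instance : ∀ w t, Decidable (UnpairedRightAt w t) := fun w t => by
  unfold UnpairedRightAt; infer_instance

instance : ∀ w t, Decidable (UnpairedLeftAt w t) := fun w t => by
  unfold UnpairedLeftAt; infer_instance

def numUR (w : List Bool) : ℕ :=
  ((Finset.range w.length).filter fun t => UnpairedRightAt w t).card

def numUL (w : List Bool) : ℕ :=
  ((Finset.range w.length).filter fun t => UnpairedLeftAt w t).card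

/-- Number of unpaired left parentheses strictly to the left of `t`. -/
def cULbefore (w : List Bool) (t : ℕ) : ℕ :=
  ((Finset.range w.length).filter fun s => s < t ∧ UnpairedLeftAt w s).card

/-- Number of unpaired right parentheses strictly to the right of `t`. -/
def cURafter (w : List Bool) (t : ℕ) : ℕ :=
  ((Finset.range w.length).filter fun s => t < s ∧ UnpairedRightAt w s).card

/-- The words `w` and `w'` differ at position `t`. -/
def Differs (w w' : List Bool) (t : ℕ) : Prop := w.getD t false ≠ w'.getD t false

/-- `(c1', c2')` is the image of `(c1, c2)` under the Lascoux–Schützenberger /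
Remmel–Shimozono parenthesation involution: the sorted word of entries is
preserved, and the parenthesis word is modified as follows.  With `r` (resp.
`l`) the number of unpaired right (resp. left) parentheses of the word of
`(c1, c2)`: if `r = 0` nothing changes; if `0 < r ≤ l` the `l - r + 1`
leftmost unpaired left parentheses are changed to right parentheses; if
`r > l` the `r - l - 1` rightmost unpaired right parentheses are changed to
left parentheses. -/
def IsPsiPair {n a1 b1 a2 b2 : ℕ} (c1 : Fin a1 → Fin n) (c2 : Fin b1 → Fin n)
    (c1' : Fin a2 → Fin n) (c2' : Fin b2 → Fin n) : Prop :=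
  pairVals c1 c2 = pairVals c1' c2' ∧
  (numUR (pairWord c1 c2) = 0 →
    ∀ t, ¬ Differs (pairWord c1 c2) (pairWord c1' c2') t) ∧
  (0 < numUR (pairWord c1 c2) → numUR (pairWord c1 c2) ≤ numUL (pairWord c1 c2) →
    ∀ t, Differs (pairWord c1 c2) (pairWord c1' c2') t ↔
      (UnpairedLeftAt (pairWord c1 c2) t ∧
        cULbefore (pairWord c1 c2) t <
          numUL (pairWord c1 c2) - numUR (pairWord c1 c2) + 1)) ∧
  (numUL (pairWord c1 c2) < numUR (pairWord c1 c2) →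
    ∀ t, Differs (pairWord c1 c2) (pairWord c1' c2') t ↔
      (UnpairedRightAt (pairWord c1 c2) t ∧
        cURafter (pairWord c1 c2) t <
          numUR (pairWord c1 c2) - numUL (pairWord c1 c2) - 1))
instance : IsTrans (ℕ × ℕ) sortKey := ⟨by intro p q r h h'; unfold sortKey at *; omega⟩
instance : IsTotal (ℕ × ℕ) sortKey := ⟨by intro p q; unfold sortKey; omega⟩

theorem sortKey_antisymm {p q : ℕ × ℕ} (h : sortKey p q) (h' : sortKey q p) : p = q := by
  unfold sortKey at *
  have : p.1 = q.1 ∧ p.2 = q.2 := by omega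
  exact Prod.ext this.1 this.2

theorem countP_ofFn' {α : Type*} {m : ℕ} (g : Fin m → α) (P : α → Bool) :
    (List.ofFn g).countP P = (Finset.univ.filter fun i => P (g i)).card := by
  rw [List.ofFn_eq_map, List.countP_map, List.countP_eq_length_filter]
  rw [Finset.card_def, Finset.filter_val, Fin.univ_def]
  simp [Multiset.filter_coe]
  rfl

theorem count_map_eq {α : Type*} (f : α → Bool) (l : List α) (b : Bool) :
    (l.map f).count b = l.countP fun q => f q == b := by
  rw [List.count, List.countP_map]; rfl

theorem take_countP (L : List (ℕ × ℕ)) (hs : L.Pairwise sortKey) (hn : L.Nodup)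
    (t : ℕ) (ht : t < L.length) (p : ℕ × ℕ) (hp : L.get ⟨t, ht⟩ = p)
    (P : ℕ × ℕ → Bool) :
    (L.take t).countP P =
      L.countP fun q => P q && decide (sortKey q p ∧ q ≠ p) := by
  have h1 : ∀ q ∈ L.take t, sortKey q p ∧ q ≠ p := by
    intro q hq
    obtain ⟨i, hi, rfl⟩ := List.mem_iff_getElem.1 hq
    have hi' : i < t := by simpa using hi.trans_le (by simp)
    have hiL : i < L.length := by omega
    rw [List.getElem_take]
    have hrel := hs.rel_get_of_lt (a := ⟨i, hiL⟩) (b := ⟨t, ht⟩) (by simpa using hi')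
    rw [hp] at hrel
    refine ⟨hrel, fun h => ?_⟩
    rw [← hp] at h
    have := hn.get_inj_iff.1 h
    simp at this; omega
  have h2 : ∀ q ∈ L.drop t, ¬(sortKey q p ∧ q ≠ p) := by
    intro q hq
    obtain ⟨i, hi, rfl⟩ := List.mem_iff_getElem.1 hq
    rw [List.getElem_drop]
    rintro ⟨hk, hne⟩
    rcases Nat.eq_zero_or_pos i with rfl | hpos
    · exact hne (by simpa using hp)
    · have hti : t + i < L.length := by simp at hi; omega
      have hrel := hs.rel_get_of_lt (a := ⟨t, ht⟩) (b := ⟨t + i, hti⟩) (by simp; omega)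
      rw [hp] at hrel
      exact hne (sortKey_antisymm hk hrel)
  conv_rhs => rw [← List.take_append_drop t L]
  rw [List.countP_append]
  have e1 : (L.take t).countP (fun q => P q && decide (sortKey q p ∧ q ≠ p)) =
      (L.take t).countP P := by
    apply List.countP_congr
    intro q hq
    simp [h1 q hq]
  have e2 : (L.drop t).countP (fun q => P q && decide (sortKey q p ∧ q ≠ p)) = 0 := by
    rw [List.countP_eq_zero]
    intro q hq
    simp [h2 q hq]
  omega

section pair
variable {n a b : ℕ} (c1 : Fin a → Fin n) (c2 : Fin b → Fin n)

def baseList : List (ℕ × ℕ) :=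
  (List.ofFn fun r => ((c1 r : ℕ), 0)) ++ List.ofFn fun s => ((c2 s : ℕ), 1)

theorem pairList_perm : List.Perm (pairList c1 c2) (baseList c1 c2) :=
  List.perm_insertionSort _ _

theorem pairList_sorted : (pairList c1 c2).Pairwise sortKey := List.pairwise_insertionSort _ _

theorem pairList_nodup (h1 : StrictMono c1) (h2 : StrictMono c2) :
    (pairList c1 c2).Nodup := by
  rw [(pairList_perm c1 c2).nodup_iff]
  rw [baseList, List.nodup_append']
  refine ⟨?_, ?_, ?_⟩
  · rw [List.nodup_ofFn]
    intro i j hij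
    simp only [Prod.mk.injEq] at hij
    exact h1.injective (Fin.val_injective (by exact_mod_cast hij.1))
  · rw [List.nodup_ofFn]
    intro i j hij
    simp only [Prod.mk.injEq] at hij
    exact h2.injective (Fin.val_injective (by exact_mod_cast hij.1))
  · intro p hp hq
    simp only [List.mem_ofFn, Set.mem_range] at hp hq
    obtain ⟨r, rfl⟩ := hp
    obtain ⟨s, hs⟩ := hq
    simp at hs

theorem mem_pairList_iff {p : ℕ × ℕ} :
    p ∈ pairList c1 c2 ↔ (∃ r, p = ((c1 r : ℕ), 0)) ∨ ∃ s, p = ((c2 s : ℕ), 1) := by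
  rw [(pairList_perm c1 c2).mem_iff, baseList, List.mem_append]
  simp only [List.mem_ofFn, Set.mem_range]
  constructor
  · rintro (⟨r, rfl⟩ | ⟨s, rfl⟩)
    · exact Or.inl ⟨r, rfl⟩
    · exact Or.inr ⟨s, rfl⟩
  · rintro (⟨r, rfl⟩ | ⟨s, rfl⟩)
    · exact Or.inl ⟨r, rfl⟩
    · exact Or.inr ⟨s, rfl⟩

theorem pairList_length : (pairList c1 c2).length = a + b := by
  rw [(pairList_perm c1 c2).length_eq, baseList]
  simp

theorem pairWord_length : (pairWord c1 c2).length = a + b := by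
  rw [pairWord, List.length_map, pairList_length]

theorem pair_counts (h1 : StrictMono c1) (h2 : StrictMono c2) (s : Fin b) (t : ℕ)
    (ht : t < (pairList c1 c2).length)
    (hp : (pairList c1 c2).get ⟨t, ht⟩ = ((c2 s : ℕ), 1)) :
    ((pairWord c1 c2).take t).count false = (s : ℕ) ∧
    ((pairWord c1 c2).take t).count true =
      (Finset.univ.filter fun r : Fin a => (c1 r : ℕ) ≤ (c2 s : ℕ)).card := by
  have hs := pairList_sorted c1 c2
  have hn := pairList_nodup c1 c2 h1 h2
  have hmap : (pairWord c1 c2).take t = ((pairList c1 c2).take t).map fun p => p.2 == 0 := by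
    rw [pairWord, List.map_take]
  constructor
  · rw [hmap, count_map_eq,
      take_countP _ hs hn t ht _ hp,
      (pairList_perm c1 c2).countP_eq, baseList, List.countP_append,
      countP_ofFn', countP_ofFn']
    simp
    have e2 : (Finset.univ.filter fun s' : Fin b =>
        sortKey ((c2 s' : ℕ), 1) ((c2 s : ℕ), 1) ∧ ¬ ((c2 s' : ℕ) = (c2 s : ℕ)))
        = Finset.Iio s := by
      refine Finset.ext fun s' => ?_
      rw [Finset.mem_filter]
      simp only [Finset.mem_filter, Finset.mem_univ, true_and, Finset.mem_Iio, sortKey]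
      constructor
      · rintro ⟨hk, hne⟩
        have hv : (c2 s' : ℕ) < (c2 s : ℕ) := by
          rcases hk with h | h
          · exact h
          · exact absurd h.1 hne
        exact h2.lt_iff_lt.1 (Fin.lt_def.2 hv)
      · intro hlt
        have hv : (c2 s' : ℕ) < (c2 s : ℕ) := Fin.lt_def.1 (h2 hlt)
        exact ⟨Or.inl hv, by omega⟩
    rw [e2, Fin.card_Iio]
  · rw [hmap, count_map_eq,
      take_countP _ hs hn t ht _ hp,
      (pairList_perm c1 c2).countP_eq, baseList, List.countP_append,
      countP_ofFn', countP_ofFn']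
    simp
    congr 1
    apply Finset.filter_congr
    intro r _
    simp only [sortKey, Fin.le_def]
    omega


theorem filter_card_gt (h1 : StrictMono c1) (s : Fin b) (h : (s : ℕ) < a)
    (hle : c1 ⟨s, h⟩ ≤ c2 s) :
    (s : ℕ) < (Finset.univ.filter fun r : Fin a => (c1 r : ℕ) ≤ (c2 s : ℕ)).card := by
  have hsub : Finset.Iic (⟨s, h⟩ : Fin a) ⊆
      Finset.univ.filter fun r : Fin a => (c1 r : ℕ) ≤ (c2 s : ℕ) := by
    intro r hr
    rw [Finset.mem_Iic] at hr
    rw [Finset.mem_filter]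
    exact ⟨Finset.mem_univ _, Fin.le_def.1 (le_trans (h1.monotone hr) hle)⟩
  have := Finset.card_le_card hsub
  rw [Fin.card_Iic] at this
  have hk : ((⟨s, h⟩ : Fin a) : ℕ) = (s : ℕ) := rfl
  omega

theorem filter_card_le (h1 : StrictMono c1) (s : Fin b)
    (hno : ¬ ∃ h : (s : ℕ) < a, c1 ⟨s, h⟩ ≤ c2 s) :
    (Finset.univ.filter fun r : Fin a => (c1 r : ℕ) ≤ (c2 s : ℕ)).card ≤ (s : ℕ) := by
  have hmem : ∀ r ∈ (Finset.univ.filter fun r : Fin a => (c1 r : ℕ) ≤ (c2 s : ℕ)),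
      (r : ℕ) ∈ Finset.range (s : ℕ) := by
    intro r hr
    rw [Finset.mem_filter] at hr
    rw [Finset.mem_range]
    by_cases h : (s : ℕ) < a
    · have hgt : c2 s < c1 ⟨s, h⟩ := lt_of_not_ge fun hc => hno ⟨h, hc⟩
      have hgt' : (c2 s : ℕ) < (c1 ⟨s, h⟩ : ℕ) := Fin.lt_def.1 hgt
      have : r < (⟨s, h⟩ : Fin a) := h1.lt_iff_lt.1 (Fin.lt_def.2 (by omega))
      exact this
    · have := r.isLt
      omega
  have hinj : Set.InjOn (fun r : Fin a => (r : ℕ))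
      ((Finset.univ.filter fun r : Fin a => (c1 r : ℕ) ≤ (c2 s : ℕ)) : Set (Fin a)) :=
    fun x _ y _ hxy => Fin.val_injective hxy
  have := Finset.card_le_card_of_injOn _ hmem hinj
  rwa [Finset.card_range] at this

theorem pair_iff (h1 : StrictMono c1) (h2 : StrictMono c2) :
    (∀ t, ¬ UnpairedRightAt (pairWord c1 c2) t) ↔
      ∀ s : Fin b, ∃ h : (s : ℕ) < a, c1 ⟨s, h⟩ ≤ c2 s := by
  constructor
  · intro hnp s
    by_contra hno
    have hmem : ((c2 s : ℕ), 1) ∈ pairList c1 c2 :=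
      (mem_pairList_iff c1 c2).2 (Or.inr ⟨s, rfl⟩)
    obtain ⟨⟨t, ht⟩, hp⟩ := List.mem_iff_get.1 hmem
    obtain ⟨hcf, hct⟩ := pair_counts c1 c2 h1 h2 s t ht hp
    have htw : t < (pairWord c1 c2).length := by
      rw [pairWord, List.length_map]; exact ht
    apply hnp t
    refine ⟨htw, ?_, ?_⟩
    · rw [List.getD_eq_getElem _ _ htw]
      simp only [pairWord, List.getElem_map]
      have : (pairList c1 c2)[t] = ((c2 s : ℕ), 1) := hp
      rw [this]
      rfl
    · rw [hcf, hct]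
      exact filter_card_le c1 c2 h1 s hno
  · intro hall t hUR
    obtain ⟨htl, hgd, hcnt⟩ := hUR
    have htL : t < (pairList c1 c2).length := by
      rw [pairWord, List.length_map] at htl; exact htl
    have hmem : (pairList c1 c2).get ⟨t, htL⟩ ∈ pairList c1 c2 := List.get_mem _ _
    rcases (mem_pairList_iff c1 c2).1 hmem with ⟨r, hr⟩ | ⟨s, hs⟩
    · rw [List.getD_eq_getElem _ _ htl] at hgd
      simp only [pairWord, List.getElem_map] at hgd
      have : (pairList c1 c2)[t] = ((c1 r : ℕ), 0) := hr
      rw [this] at hgd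
      simp at hgd
    · obtain ⟨hcf, hct⟩ := pair_counts c1 c2 h1 h2 s t htL hs
      obtain ⟨h, hle⟩ := hall s
      have := filter_card_gt c1 c2 h1 s h hle
      omega

end pair

theorem stmt11 (n ℓ : ℕ) (α : Fin ℓ → ℕ) (T : ∀ j, Fin (α j) → Fin n)
    (hT : ∀ j, StrictMono (T j)) :
    (Antitone α ∧
      ∀ j j' : Fin ℓ, (j' : ℕ) = (j : ℕ) + 1 →
        ∀ (i : Fin (α j)) (i' : Fin (α j')), (i : ℕ) = (i' : ℕ) → T j i ≤ T j' i') ↔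
    (∀ j j' : Fin ℓ, (j' : ℕ) = (j : ℕ) + 1 →
      ∀ t, ¬ UnpairedRightAt (pairWord (T j) (T j')) t) := by
  constructor
  · rintro ⟨hant, hrow⟩ j j' hjj'
    rw [pair_iff _ _ (hT j) (hT j')]
    intro s
    have hle : α j' ≤ α j := hant (Fin.le_def.2 (by omega))
    have h : (s : ℕ) < α j := lt_of_lt_of_le s.isLt hle
    exact ⟨h, hrow j j' hjj' ⟨s, h⟩ s rfl⟩
  · intro hall
    have key : ∀ j j' : Fin ℓ, (j' : ℕ) = (j : ℕ) + 1 →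
        ∀ s : Fin (α j'), ∃ h : (s : ℕ) < α j, T j ⟨s, h⟩ ≤ T j' s :=
      fun j j' hjj' => (pair_iff _ _ (hT j) (hT j')).1 (hall j j' hjj')
    constructor
    · have step : ∀ j j' : Fin ℓ, (j' : ℕ) = (j : ℕ) + 1 → α j' ≤ α j := by
        intro j j' hjj'
        rcases Nat.eq_zero_or_pos (α j') with hz | hpos
        · omega
        · obtain ⟨h, -⟩ := key j j' hjj' ⟨α j' - 1, by omega⟩
          simp only at h
          omega
      have chain : ∀ k (j j' : Fin ℓ), (j' : ℕ) = (j : ℕ) + k → α j' ≤ α j := by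
        intro k
        induction k with
        | zero =>
          intro j j' h
          have : j' = j := Fin.ext (by omega)
          rw [this]
        | succ k ih =>
          intro j j' h
          have hm : (j : ℕ) + k < ℓ := by have := j'.isLt; omega
          exact le_trans (step ⟨(j : ℕ) + k, hm⟩ j' (by simp; omega))
            (ih j ⟨(j : ℕ) + k, hm⟩ rfl)
      intro j j' hjj'
      exact chain ((j' : ℕ) - (j : ℕ)) j j' (by have := Fin.le_def.1 hjj'; omega)
    · intro j j' hjj' i i' hii'
      obtain ⟨h, hle⟩ := key j j' hjj' i'
      have hi : (⟨(i' : ℕ), h⟩ : Fin (α j)) = i := Fin.ext (by simpa using hii'.symm)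
      rw [← hi]
      exact hle
end
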